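/- Let 𝔬 be a complete discrete valuation ring with finite residue field, ℓ ≥ 1, 𝔬_ℓ = 𝔬/𝔭^ℓ. Let A₁ ∈ Mat_{d₁}(𝔬_ℓ), A₂ ∈ Mat_{d₂}(𝔬_ℓ) be matrices whose reductions modulo the maximal ideal have coprime characteristic polynomials over the residue field. Then for every C ∈ Mat_{d₂×d₁}(𝔬_ℓ) and every B ∈ Mat_{d₁×d₂}(𝔬_ℓ), the map Mat_{d₁×d₂}(𝔬_{ℓ−1}) → Mat_{d₁×d₂}(𝔬_{ℓ−1}), V ↦ V A₂ − A₁ V − π V C V (mod 𝔭^{ℓ−1}), is surjective; in particular there exists V with B + V A₂ − A₁ V − π V C V ≡ 0 (mod 𝔭^{ℓ−1}). -/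

import Mathlib

open Matrix Polynomial

section Field

variable {K : Type*} [Field K] {d₁ d₂ : ℕ}

private lemma sylv_surj (A₁ : Matrix (Fin d₁) (Fin d₁) K) (A₂ : Matrix (Fin d₂) (Fin d₂) K)
    (hcop : IsCoprime A₁.charpoly A₂.charpoly) (B : Matrix (Fin d₁) (Fin d₂) K) :
    ∃ V : Matrix (Fin d₁) (Fin d₂) K, V * A₂ - A₁ * V = B := by
  let L : Matrix (Fin d₁) (Fin d₂) K →ₗ[K] Matrix (Fin d₁) (Fin d₂) K :=
    { toFun := fun V => V * A₂ - A₁ * V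
      map_add' := by
        intro x y
        rw [Matrix.add_mul, Matrix.mul_add]
        abel
      map_smul' := by
        intro c x
        simp only [Matrix.smul_mul, Matrix.mul_smul, smul_sub, RingHom.id_apply] }
  have hinj : Function.Injective L := by
    rw [← LinearMap.ker_eq_bot, LinearMap.ker_eq_bot']
    intro V hV
    have hcomm : V * A₂ = A₁ * V := by
      have : V * A₂ - A₁ * V = 0 := hV
      linear_combination (norm := noncomm_ring) this
    have hpow : ∀ n : ℕ, V * A₂ ^ n = A₁ ^ n * V := by
      intro n
      induction n with
      | zero => simp
      | succ n ih =>
        rw [pow_succ, pow_succ, ← Matrix.mul_assoc, ih, Matrix.mul_assoc, hcomm, ← Matrix.mul_assoc]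
    have key : ∀ p : K[X], V * (aeval A₂ p) = (aeval A₁ p) * V := by
      intro p
      induction p using Polynomial.induction_on' with
      | add p q hp hq => simp only [map_add, Matrix.mul_add, Matrix.add_mul, hp, hq]
      | monomial n a =>
        simp only [aeval_monomial, Algebra.algebraMap_eq_smul_one, Matrix.smul_mul,
          Matrix.mul_smul, Matrix.one_mul, hpow n]
    obtain ⟨a, b, hab⟩ := hcop
    have h2 : aeval A₂ a * aeval A₂ A₁.charpoly = 1 := by
      have := congrArg (aeval A₂) hab
      simpa [Matrix.aeval_self_charpoly] using this
    calc V = V * (aeval A₂ A₁.charpoly * aeval A₂ a) := by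
            rw [← _root_.map_mul, mul_comm A₁.charpoly a, _root_.map_mul, h2, Matrix.mul_one]
      _ = (aeval A₁ A₁.charpoly) * V * aeval A₂ a := by
            rw [← Matrix.mul_assoc, key]
      _ = 0 := by rw [Matrix.aeval_self_charpoly, Matrix.zero_mul, Matrix.zero_mul]
  have hsurj : Function.Surjective L := (LinearMap.injective_iff_surjective).mp hinj
  obtain ⟨V, hV⟩ := hsurj B
  exact ⟨V, hV⟩

end Field

section DVR

variable {O : Type*} [CommRing O] [IsDomain O] [IsDiscreteValuationRing O] {d₁ d₂ : ℕ}

private lemma sylv_lift (A₁ : Matrix (Fin d₁) (Fin d₁) O) (A₂ : Matrix (Fin d₂) (Fin d₂) O)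
    (hcop : IsCoprime ((A₁.map (IsLocalRing.residue O)).charpoly)
                      ((A₂.map (IsLocalRing.residue O)).charpoly))
    (E : Matrix (Fin d₁) (Fin d₂) O) :
    ∃ W : Matrix (Fin d₁) (Fin d₂) O,
      ∀ i j, (W * A₂ - A₁ * W - E) i j ∈ IsLocalRing.maximalIdeal O := by
  set φ := IsLocalRing.residue O
  obtain ⟨Vb, hVb⟩ := sylv_surj (A₁.map φ) (A₂.map φ) hcop (E.map φ)
  have hφ : Function.Surjective φ := IsLocalRing.residue_surjective
  choose W hW using fun i j => hφ (Vb i j)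
  refine ⟨Matrix.of W, fun i j => ?_⟩
  have hmap : (Matrix.of W).map φ = Vb := by
    ext i j; exact hW i j
  have : ((Matrix.of W * A₂ - A₁ * Matrix.of W - E).map φ) = 0 := by
    rw [Matrix.map_sub _ (fun a b => map_sub φ a b), Matrix.map_sub _ (fun a b => map_sub φ a b), Matrix.map_mul, Matrix.map_mul, hmap, hVb]
    simp
  have h0 : φ ((Matrix.of W * A₂ - A₁ * Matrix.of W - E) i j) = 0 := by
    have := congrFun (congrFun this i) j
    simpa [Matrix.map_apply] using this
  exact (Ideal.Quotient.eq_zero_iff_mem).mp h0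

private lemma sylv_induction (π : O) (hπ : Irreducible π)
    (A₁ : Matrix (Fin d₁) (Fin d₁) O) (A₂ : Matrix (Fin d₂) (Fin d₂) O)
    (hcop : IsCoprime ((A₁.map (IsLocalRing.residue O)).charpoly)
                      ((A₂.map (IsLocalRing.residue O)).charpoly))
    (C : Matrix (Fin d₂) (Fin d₁) O) (n : ℕ) :
    ∀ B : Matrix (Fin d₁) (Fin d₂) O, ∃ V : Matrix (Fin d₁) (Fin d₂) O,
      ∀ i j, (V * A₂ - A₁ * V - π • (V * C * V) - B) i j ∈
        IsLocalRing.maximalIdeal O ^ n := by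
  have hπmem : π ∈ IsLocalRing.maximalIdeal O := by
    rw [hπ.maximalIdeal_eq]; exact Ideal.mem_span_singleton_self π
  induction n with
  | zero => intro B; exact ⟨0, fun i j => by simp⟩
  | succ n ih =>
    intro B
    obtain ⟨V, hV⟩ := ih B
    -- extract E' with error = π^n • E'
    have hE' : ∀ i j, ∃ c, (V * A₂ - A₁ * V - π • (V * C * V) - B) i j = π ^ n * c := by
      intro i j
      have := hV i j
      rw [hπ.maximalIdeal_eq, Ideal.span_singleton_pow, Ideal.mem_span_singleton'] at this
      obtain ⟨c, hc⟩ := this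
      exact ⟨c, by rw [← hc, mul_comm]⟩
    choose E' hEeq using fun i j => hE' i j
    have hE : V * A₂ - A₁ * V - π • (V * C * V) - B = π ^ n • Matrix.of E' := by
      ext i j; simpa [Matrix.smul_apply, smul_eq_mul] using hEeq i j
    obtain ⟨W, hW⟩ := sylv_lift A₁ A₂ hcop (Matrix.of E')
    set D := Matrix.of E' - (W * A₂ - A₁ * W) with hD
    refine ⟨V - π ^ n • W, fun i j => ?_⟩
    have hiden : (V - π ^ n • W) * A₂ - A₁ * (V - π ^ n • W)
        - π • ((V - π ^ n • W) * C * (V - π ^ n • W)) - B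
        = π ^ n • D + π ^ (n + 1) • (W * C * V) + π ^ (n + 1) • (V * C * W)
          - π ^ (2 * n + 1) • (W * C * W) := by
      have expand : (V - π ^ n • W) * A₂ - A₁ * (V - π ^ n • W)
          - π • ((V - π ^ n • W) * C * (V - π ^ n • W)) - B
          = (V * A₂ - A₁ * V - π • (V * C * V) - B)
            + π ^ n • (W * A₂ - A₁ * W) - π ^ n • (W * A₂ - A₁ * W)
            - π ^ n • (W * A₂ - A₁ * W)
            + π ^ (n + 1) • (W * C * V) + π ^ (n + 1) • (V * C * W)
            - π ^ (2 * n + 1) • (W * C * W) := by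
        simp only [Matrix.sub_mul, Matrix.mul_sub, Matrix.smul_mul, Matrix.mul_smul,
          smul_sub, smul_smul]
        match_scalars <;> ring
      rw [expand, hE, hD]
      simp only [smul_sub]
      abel
    rw [hiden]
    have h1 : (π ^ n • D) i j ∈ IsLocalRing.maximalIdeal O ^ (n + 1) := by
      rw [Matrix.smul_apply, smul_eq_mul, pow_succ]
      refine Ideal.mul_mem_mul (Ideal.pow_mem_pow hπmem n) ?_
      have hDij : D i j = -((W * A₂ - A₁ * W - Matrix.of E') i j) := by
        simp [hD, Matrix.sub_apply]
      rw [hDij]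
      exact neg_mem (hW i j)
    have h2 : ∀ (M : Matrix (Fin d₁) (Fin d₂) O),
        (π ^ (n + 1) • M) i j ∈ IsLocalRing.maximalIdeal O ^ (n + 1) := by
      intro M
      rw [Matrix.smul_apply, smul_eq_mul]
      exact Ideal.mul_mem_right _ _ (Ideal.pow_mem_pow hπmem (n + 1))
    have h3 : (π ^ (2 * n + 1) • (W * C * W)) i j ∈ IsLocalRing.maximalIdeal O ^ (n + 1) := by
      rw [Matrix.smul_apply, smul_eq_mul]
      exact Ideal.mul_mem_right _ _
        (Ideal.pow_le_pow_right (by omega) (Ideal.pow_mem_pow hπmem (2 * n + 1)))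
    simpa [Matrix.add_apply, Matrix.sub_apply] using
      sub_mem (add_mem (add_mem h1 (h2 _)) (h2 _)) h3

end DVR

theorem sylvester_type_surjectivity
    (O : Type*) [CommRing O] [IsDomain O] [IsDiscreteValuationRing O]
    [IsAdicComplete (IsLocalRing.maximalIdeal O) O]
    [Finite (IsLocalRing.ResidueField O)]
    (ℓ : ℕ) (hℓ : 1 ≤ ℓ) (π : O) (hπ : Irreducible π)
    (d₁ d₂ : ℕ)
    (A₁ : Matrix (Fin d₁) (Fin d₁) O) (A₂ : Matrix (Fin d₂) (Fin d₂) O)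
    (hcop : IsCoprime ((A₁.map (IsLocalRing.residue O)).charpoly)
                      ((A₂.map (IsLocalRing.residue O)).charpoly))
    (C : Matrix (Fin d₂) (Fin d₁) O) :
    (∀ B : Matrix (Fin d₁) (Fin d₂) O, ∃ V : Matrix (Fin d₁) (Fin d₂) O,
        ∀ i j, (V * A₂ - A₁ * V - π • (V * C * V) - B) i j ∈
          IsLocalRing.maximalIdeal O ^ (ℓ - 1)) ∧
    (∀ B : Matrix (Fin d₁) (Fin d₂) O, ∃ V : Matrix (Fin d₁) (Fin d₂) O,
        ∀ i j, (B + V * A₂ - A₁ * V - π • (V * C * V)) i j ∈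
          IsLocalRing.maximalIdeal O ^ (ℓ - 1)) := by
  have main := sylv_induction π hπ A₁ A₂ hcop C (ℓ - 1)
  refine ⟨main, fun B => ?_⟩
  obtain ⟨V, hV⟩ := main (-B)
  refine ⟨V, fun i j => ?_⟩
  have heq : B + V * A₂ - A₁ * V - π • (V * C * V)
      = V * A₂ - A₁ * V - π • (V * C * V) - (-B) := by abel
  rw [heq]
  exact hV i j
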